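/- Every truncation quasi-greedy basis of a quasi-Banach space is nearly unconditional. -/

import Mathlib

open Finset Set

/-- A (quasi-)basis of a quasi-Banach space: a quasi-norm `q` with modulus of
concavity `κ`, together with a norm-bounded biorthogonal system `(e, c)`. -/
structure QBasis (X : Type*) [AddCommGroup X] [Module ℝ X] where
  q : X → ℝ
  κ : ℝ
  one_le_κ : 1 ≤ κ
  q_nonneg : ∀ f, 0 ≤ q f
  q_eq_zero_iff : ∀ f, q f = 0 ↔ f = 0
  q_smul : ∀ (t : ℝ) (f : X), q (t • f) = |t| * q f
  q_add : ∀ f g, q (f + g) ≤ κ * (q f + q g)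
  e : ℕ → X
  c : ℕ → X →ₗ[ℝ] ℝ
  biorth : ∀ m n, c m (e n) = if m = n then (1 : ℝ) else 0
  e_bdd : ∃ M, ∀ n, q (e n) ≤ M
  c_bdd : ∃ M, ∀ n f, |c n f| ≤ M * q f

namespace QBasis

variable {X : Type*} [AddCommGroup X] [Module ℝ X] (B : QBasis X)

/-- Coordinate projection on a finite set `A`. -/
noncomputable def S (A : Finset ℕ) (f : X) : X := ∑ n ∈ A, B.c n f • B.e n

/-- The set `𝒬` of vectors with coefficients in the unit ball of `ℓ∞`. -/
def inQ (f : X) : Prop := ∀ n, |B.c n f| ≤ 1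

/-- `A` is the set `A(a,f) = {n : |c n f| ≥ a}` of coefficients above the threshold `a`. -/
def thrSet (a : ℝ) (f : X) (A : Finset ℕ) : Prop := ∀ n, n ∈ A ↔ a ≤ |B.c n f|

/-- `A` is a greedy set of `f`. -/
def greedySet (f : X) (A : Finset ℕ) : Prop :=
  ∀ n ∈ A, ∀ k, k ∉ A → |B.c k f| ≤ |B.c n f|

/-- The restricted truncation operator associated with a finite set `A`:
`R(f,A) = min_{n∈A} |c n f| ∑_{n∈A} sgn (c n f) • e n`. -/
noncomputable def R (A : Finset ℕ) (f : X) : X :=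
  if h : A.Nonempty then
    (A.inf' h fun n => |B.c n f|) • ∑ n ∈ A, Real.sign (B.c n f) • B.e n
  else 0

/-- `lam` is the nearly truncation quasi-greedy function of the basis: for every
`a ∈ (0,1)`, `lam a` is the smallest constant `C` with `q (R^{(a)} f) ≤ C * q f`
for all `f ∈ 𝒬`. -/
def NTQGFun (lam : ℝ → ℝ) : Prop :=
  ∀ a ∈ Set.Ioo (0 : ℝ) 1,
    (∀ f, B.inQ f → ∀ A : Finset ℕ, B.thrSet a f A → B.q (B.R A f) ≤ lam a * B.q f) ∧
    (∀ C : ℝ, (∀ f, B.inQ f → ∀ A : Finset ℕ, B.thrSet a f A → B.q (B.R A f) ≤ C * B.q f) →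
      lam a ≤ C)

/-- The basis is nearly truncation quasi-greedy. -/
def NearlyTQG : Prop :=
  ∀ a ∈ Set.Ioo (0 : ℝ) 1, ∃ C : ℝ,
    ∀ f, B.inQ f → ∀ A : Finset ℕ, B.thrSet a f A → B.q (B.R A f) ≤ C * B.q f

/-- The basis is nearly unconditional. -/
def NearlyUnconditional : Prop :=
  ∀ a ∈ Set.Ioo (0 : ℝ) 1, ∃ C : ℝ,
    ∀ f, B.inQ f → ∀ Aa A : Finset ℕ, B.thrSet a f Aa → A ⊆ Aa → B.q (B.S A f) ≤ C * B.q f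

/-- `phi` is the nearly unconditionality function: `phi a` is the smallest `C` with
`q (S_A f) ≤ C * q f` for `f ∈ 𝒬` and `A ⊆ A(a,f)`. -/
def NUFun (phi : ℝ → ℝ) : Prop :=
  ∀ a ∈ Set.Ioo (0 : ℝ) 1,
    (∀ f, B.inQ f → ∀ Aa A : Finset ℕ, B.thrSet a f Aa → A ⊆ Aa →
      B.q (B.S A f) ≤ phi a * B.q f) ∧
    (∀ C : ℝ, (∀ f, B.inQ f → ∀ Aa A : Finset ℕ, B.thrSet a f Aa → A ⊆ Aa →
      B.q (B.S A f) ≤ C * B.q f) → phi a ≤ C)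

/-- `theta` is the thresholding-boundedness function: `theta a` is the smallest `C` with
`q (S_{A(a,f)} f) ≤ C * q f` for `f ∈ 𝒬`. -/
def ThetaFun (theta : ℝ → ℝ) : Prop :=
  ∀ a ∈ Set.Ioo (0 : ℝ) 1,
    (∀ f, B.inQ f → ∀ A : Finset ℕ, B.thrSet a f A → B.q (B.S A f) ≤ theta a * B.q f) ∧
    (∀ C : ℝ, (∀ f, B.inQ f → ∀ A : Finset ℕ, B.thrSet a f A → B.q (B.S A f) ≤ C * B.q f) →
      theta a ≤ C)

/-- The basis is truncation quasi-greedy: the restricted truncation operators are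
uniformly bounded over greedy sets. -/
def TruncationQG : Prop :=
  ∃ C : ℝ, ∀ f (A : Finset ℕ), B.greedySet f A → B.q (B.R A f) ≤ C * B.q f

end QBasis


section AuxSign

lemma sgn_mul_abs (x : ℝ) : Real.sign x * |x| = x := by
  rcases lt_trichotomy x 0 with h | h | h
  · rw [Real.sign_of_neg h, abs_of_neg h]; ring
  · simp [h]
  · rw [Real.sign_of_pos h, abs_of_pos h]; ring

lemma abs_sgn_le_one (x : ℝ) : |Real.sign x| ≤ 1 := by
  rcases lt_trichotomy x 0 with h | h | h
  · rw [Real.sign_of_neg h]; norm_num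
  · simp [h]
  · rw [Real.sign_of_pos h]; norm_num

end AuxSign

namespace QBasis

variable {X : Type*} [AddCommGroup X] [Module ℝ X] (B : QBasis X)

lemma q_zero : B.q 0 = 0 := by
  have h := B.q_smul 0 0
  simpa using h

lemma q_neg (f : X) : B.q (-f) = B.q f := by
  have h := B.q_smul (-1) f
  simpa using h

lemma q_sub_le (f g : X) : B.q (f - g) ≤ B.κ * (B.q f + B.q g) := by
  have h := B.q_add f (-g)
  rw [B.q_neg] at h
  simpa [sub_eq_add_neg] using h

lemma q_finset_sum (s : Finset ℕ) (x : ℕ → X) :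
    B.q (∑ n ∈ s, x n) ≤ B.κ ^ s.card * ∑ n ∈ s, B.q (x n) := by
  classical
  have hκ := B.one_le_κ
  induction s using Finset.induction with
  | empty => simp [B.q_zero]
  | insert b s0 hnotmem ih =>
    rw [Finset.sum_insert hnotmem, Finset.sum_insert hnotmem,
      Finset.card_insert_of_notMem hnotmem]
    have h1 := B.q_add (x b) (∑ n ∈ s0, x n)
    have hpow : (1:ℝ) ≤ B.κ ^ s0.card := one_le_pow₀ hκ
    have hqb := B.q_nonneg (x b)
    have hsum : (0:ℝ) ≤ ∑ n ∈ s0, B.q (x n) :=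
      Finset.sum_nonneg fun n _ => B.q_nonneg (x n)
    have hκ0 : (0:ℝ) ≤ B.κ := by linarith
    calc B.q (x b + ∑ n ∈ s0, x n) ≤ B.κ * (B.q (x b) + B.q (∑ n ∈ s0, x n)) := h1
    _ ≤ B.κ * (B.q (x b) + B.κ ^ s0.card * ∑ n ∈ s0, B.q (x n)) := by nlinarith [ih]
    _ ≤ B.κ ^ (s0.card + 1) * (B.q (x b) + ∑ n ∈ s0, B.q (x n)) := by
        rw [pow_succ]
        nlinarith [mul_nonneg (by linarith : (0:ℝ) ≤ B.κ ^ s0.card - 1) (mul_nonneg hκ0 hqb)]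

lemma c_sum (n : ℕ) (s : Finset ℕ) (w : ℕ → ℝ) :
    B.c n (∑ m ∈ s, w m • B.e m) = if n ∈ s then w n else 0 := by
  classical
  rw [map_sum]
  have h : ∀ m ∈ s, B.c n (w m • B.e m) = if n = m then w m else 0 := by
    intro m _
    rw [map_smul, B.biorth]
    by_cases h : n = m <;> simp [h]
  rw [Finset.sum_congr rfl h, Finset.sum_ite_eq]

lemma key_base (C' : ℝ) (hC : 1 ≤ C')
    (hT : ∀ f A, B.greedySet f A → B.q (B.R A f) ≤ C' * B.q f)
    (b : ℝ) (hb0 : 0 < b) (hb1 : b ≤ 1)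
    (hsmall : C' * B.κ * (1 - b) ≤ 1 / 2)
    (f : X) (hf : B.inQ f) (Bs : Finset ℕ) (hBs : ∀ n ∈ Bs, b ≤ |B.c n f|) :
    B.q (∑ n ∈ Bs, Real.sign (B.c n f) • B.e n) ≤ 2 * C' * B.κ * B.q f := by
  classical
  have hκ := B.one_le_κ
  have hqf := B.q_nonneg f
  rcases Bs.eq_empty_or_nonempty with rfl | hne
  · simp only [Finset.sum_empty, B.q_zero]
    exact mul_nonneg (mul_nonneg (mul_nonneg (by norm_num) (by linarith)) (by linarith)) hqf
  set u : X := ∑ n ∈ Bs, Real.sign (B.c n f) • B.e n with hu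
  set g : X := f + (1 - b) • u with hg
  have hqu := B.q_nonneg u
  have h1b : (0:ℝ) ≤ 1 - b := by linarith
  have hcu : ∀ n, B.c n u = if n ∈ Bs then Real.sign (B.c n f) else 0 := fun n => B.c_sum n Bs _
  have hcg : ∀ n ∈ Bs, B.c n g = B.c n f + (1 - b) * Real.sign (B.c n f) := by
    intro n hn
    simp [hg, map_add, map_smul, hcu n, hn, smul_eq_mul]
  have hcg' : ∀ k, k ∉ Bs → B.c k g = B.c k f := by
    intro k hk
    simp [hg, map_add, map_smul, hcu k, hk, smul_eq_mul]
  have habs : ∀ n ∈ Bs, |B.c n g| = |B.c n f| + (1 - b) ∧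
      Real.sign (B.c n g) = Real.sign (B.c n f) := by
    intro n hn
    have hb' : b ≤ |B.c n f| := hBs n hn
    have hne0 : B.c n f ≠ 0 := by
      intro h; rw [h] at hb'; simp at hb'; linarith
    rcases hne0.lt_or_gt with hneg | hpos
    · have hgn : B.c n g = B.c n f + (1 - b) * (-1) := by
        rw [hcg n hn, Real.sign_of_neg hneg]
      have habsf : |B.c n f| = -(B.c n f) := abs_of_neg hneg
      have hgneg : B.c n g < 0 := by rw [hgn]; nlinarith [abs_nonneg (B.c n f)]
      constructor
      · rw [abs_of_neg hgneg, hgn, habsf]; ring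
      · rw [Real.sign_of_neg hgneg, Real.sign_of_neg hneg]
    · have hgn : B.c n g = B.c n f + (1 - b) * 1 := by
        rw [hcg n hn, Real.sign_of_pos hpos]
      have habsf : |B.c n f| = B.c n f := abs_of_pos hpos
      have hgpos : 0 < B.c n g := by rw [hgn]; nlinarith
      constructor
      · rw [abs_of_pos hgpos, hgn, habsf]; ring
      · rw [Real.sign_of_pos hgpos, Real.sign_of_pos hpos]
  have hgreedy : B.greedySet g Bs := by
    intro n hn k hk
    have h1 : |B.c k g| = |B.c k f| := by rw [hcg' k hk]
    have h2 := (habs n hn).1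
    have h3 := hf k
    have h4 := hBs n hn
    rw [h1, h2]; linarith
  have hqR := hT g Bs hgreedy
  have hR : B.R Bs g = (Bs.inf' hne fun n => |B.c n g|) • u := by
    rw [QBasis.R, dif_pos hne]
    congr 1
    exact Finset.sum_congr rfl fun n hn => by rw [(habs n hn).2]
  have hinf : 1 ≤ Bs.inf' hne fun n => |B.c n g| := by
    apply Finset.le_inf'
    intro n hn
    rw [(habs n hn).1]
    have := hBs n hn; linarith
  have hqRu : B.q (B.R Bs g) = (Bs.inf' hne fun n => |B.c n g|) * B.q u := by
    rw [hR, B.q_smul, abs_of_pos (by linarith)]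
  have hqg : B.q g ≤ B.κ * (B.q f + (1 - b) * B.q u) := by
    have h := B.q_add f ((1 - b) • u)
    rw [B.q_smul, abs_of_nonneg h1b] at h
    exact h
  have hchain : B.q u ≤ C' * B.κ * B.q f + C' * B.κ * (1 - b) * B.q u := by
    have h1 : B.q u ≤ B.q (B.R Bs g) := by
      rw [hqRu]; exact le_mul_of_one_le_left hqu hinf
    have h2 : C' * B.q g ≤ C' * (B.κ * (B.q f + (1 - b) * B.q u)) :=
      mul_le_mul_of_nonneg_left hqg (by linarith)
    have h3 : B.q u ≤ C' * B.q g := h1.trans hqR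
    nlinarith
  nlinarith [mul_le_mul_of_nonneg_right hsmall hqu]

noncomputable def bb : ℕ := ⌈B.κ⌉₊ + 1

noncomputable def KW : ℝ := B.κ ^ (B.bb + 1) * B.bb / (B.bb - B.κ)

lemma kappa_lt_bb : B.κ < (B.bb : ℝ) := by
  have h1 : B.κ ≤ (⌈B.κ⌉₊ : ℝ) := Nat.le_ceil B.κ
  have h2 : ((⌈B.κ⌉₊ : ℕ) : ℝ) < ((⌈B.κ⌉₊ + 1 : ℕ) : ℝ) := by exact_mod_cast Nat.lt_succ_self _
  calc B.κ ≤ _ := h1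
  _ < _ := h2

lemma bb_pos : (0:ℝ) < (B.bb : ℝ) := lt_trans (by linarith [B.one_le_κ]) B.kappa_lt_bb

lemma KW_nonneg : 0 ≤ B.KW := by
  apply div_nonneg
  · apply mul_nonneg (pow_nonneg (by linarith [B.one_le_κ]) _) (Nat.cast_nonneg _)
  · linarith [B.kappa_lt_bb]

lemma KW_rec : B.κ ^ B.bb + B.κ / B.bb * B.KW ≤ B.KW := by
  have hκ := B.one_le_κ
  have hlt := B.kappa_lt_bb
  have hbb0 := B.bb_pos
  have hne1 : ((B.bb : ℝ)) ≠ 0 := ne_of_gt hbb0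
  have hne2 : ((B.bb : ℝ)) - B.κ ≠ 0 := by linarith
  have h1 : B.KW * (1 - B.κ / (B.bb : ℝ)) = B.κ ^ (B.bb + 1) := by
    rw [KW]; field_simp
  have h2 : B.κ ^ B.bb ≤ B.κ ^ (B.bb + 1) := by
    rw [pow_succ]
    nlinarith [pow_nonneg (by linarith : (0:ℝ) ≤ B.κ) B.bb]
  nlinarith [h1, h2]

set_option maxHeartbeats 1000000 in
lemma reasm (P ρ : ℝ) (hρ : 0 ≤ ρ) (D : Finset ℕ) (σ : ℕ → X)
    (hK : ∀ Bs ⊆ D, B.q (∑ n ∈ Bs, σ n) ≤ P)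
    (r : ℕ → ℝ) (hr : ∀ n ∈ D, 0 ≤ r n ∧ r n ≤ ρ) :
    B.q (∑ n ∈ D, r n • σ n) ≤ B.KW * ρ * P := by
  classical
  have hκ := B.one_le_κ
  have hκ0 : (0:ℝ) < B.κ := by linarith
  have hbb : B.κ < (B.bb : ℝ) := B.kappa_lt_bb
  have hbb0 : (0:ℝ) < (B.bb : ℝ) := B.bb_pos
  have hKW0 := B.KW_nonneg
  have hP : 0 ≤ P := by
    have h := hK ∅ (Finset.empty_subset D)
    simpa [B.q_zero] using h
  have hPσ : ∀ n ∈ D, B.q (σ n) ≤ P := by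
    intro n hn
    have h := hK {n} (Finset.singleton_subset_iff.mpr hn)
    simpa using h
  set t : ℝ := B.κ / B.bb with ht
  have ht0 : 0 ≤ t := le_of_lt (div_pos hκ0 hbb0)
  have ht1 : t < 1 := (div_lt_one hbb0).mpr hbb
  set crude : ℝ := B.κ ^ D.card * D.card with hcrude
  have hcrude0 : 0 ≤ crude := mul_nonneg (pow_nonneg (le_of_lt hκ0) _) (Nat.cast_nonneg _)
  have main : ∀ N : ℕ, ∀ ρ' : ℝ, 0 ≤ ρ' → ∀ r' : ℕ → ℝ,
      (∀ n ∈ D, 0 ≤ r' n ∧ r' n ≤ ρ') →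
      B.q (∑ n ∈ D, r' n • σ n) ≤ (B.KW + t ^ N * crude) * (ρ' * P) := by
    intro N
    induction N with
    | zero =>
      intro ρ' hρ' r' hr'
      have h4 : (0:ℝ) ≤ ρ' * P := mul_nonneg hρ' hP
      have h2 : ∀ n ∈ D, B.q (r' n • σ n) ≤ ρ' * P := by
        intro n hn
        rw [B.q_smul, abs_of_nonneg (hr' n hn).1]
        exact mul_le_mul (hr' n hn).2 (hPσ n hn) (B.q_nonneg _) hρ'
      have h3 : ∑ n ∈ D, B.q (r' n • σ n) ≤ (D.card : ℝ) * (ρ' * P) := by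
        calc ∑ n ∈ D, B.q (r' n • σ n) ≤ ∑ _n ∈ D, ρ' * P := Finset.sum_le_sum h2
        _ = (D.card : ℝ) * (ρ' * P) := by rw [Finset.sum_const, nsmul_eq_mul]
      calc B.q (∑ n ∈ D, r' n • σ n)
          ≤ B.κ ^ D.card * ∑ n ∈ D, B.q (r' n • σ n) := B.q_finset_sum D _
      _ ≤ B.κ ^ D.card * ((D.card : ℝ) * (ρ' * P)) :=
          mul_le_mul_of_nonneg_left h3 (pow_nonneg (le_of_lt hκ0) _)
      _ = (t ^ 0 * crude) * (ρ' * P) := by rw [pow_zero, one_mul, hcrude]; ring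
      _ ≤ (B.KW + t ^ 0 * crude) * (ρ' * P) := by nlinarith
    | succ N ih =>
      intro ρ' hρ' r' hr'
      rcases eq_or_lt_of_le hρ' with hρ0 | hρpos
      · have hz : (∑ n ∈ D, r' n • σ n) = 0 := by
          apply Finset.sum_eq_zero
          intro n hn
          have h0 : r' n = 0 :=
            le_antisymm ((hr' n hn).2.trans (le_of_eq hρ0.symm)) (hr' n hn).1
          rw [h0, zero_smul]
        rw [hz, B.q_zero, ← hρ0]
        simp
      · set m : ℕ := B.bb - 1 with hm
        have hbb1 : 1 ≤ B.bb := Nat.succ_le_succ (Nat.zero_le _)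
        have hmsucc : m + 1 = B.bb := Nat.succ_pred_eq_of_pos hbb1
        have hmbb : (m : ℝ) ≤ (B.bb : ℝ) := by exact_mod_cast Nat.sub_le _ _
        set j : ℕ → ℕ := fun n => min m ⌊r' n * B.bb / ρ'⌋₊ with hj
        have hjm : ∀ n, j n ≤ m := fun n => min_le_left _ _
        set ρ2 : ℝ := ρ' / B.bb with hρ2
        have hρ2pos : 0 < ρ2 := div_pos hρpos hbb0
        have hρ20 : 0 ≤ ρ2 := le_of_lt hρ2pos
        have hjle : ∀ n ∈ D, (j n : ℝ) * ρ2 ≤ r' n := by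
          intro n hn
          have h0 := (hr' n hn).1
          have hfl : (⌊r' n * B.bb / ρ'⌋₊ : ℝ) ≤ r' n * B.bb / ρ' := by
            apply Nat.floor_le
            positivity
          have hle1 : (j n : ℝ) ≤ r' n * B.bb / ρ' := by
            refine le_trans ?_ hfl
            exact_mod_cast min_le_right m _
          have h2 : (j n : ℝ) * ρ2 ≤ (r' n * B.bb / ρ') * ρ2 :=
            mul_le_mul_of_nonneg_right hle1 hρ20
          have h3 : (r' n * B.bb / ρ') * ρ2 = r' n := by
            rw [hρ2]; field_simp
          linarith
        have hjup : ∀ n ∈ D, r' n - (j n : ℝ) * ρ2 ≤ ρ2 := by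
          intro n hn
          rcases le_or_gt m ⌊r' n * B.bb / ρ'⌋₊ with hcase | hcase
          · have hjn : j n = m := min_eq_left hcase
            rw [hjn]
            have hmρ : (m : ℝ) * ρ2 + ρ2 = ρ' := by
              have hcast : ((m : ℝ) + 1) = (B.bb : ℝ) := by exact_mod_cast hmsucc
              rw [hρ2]
              field_simp
              nlinarith [hcast]
            linarith [(hr' n hn).2]
          · have hjn : j n = ⌊r' n * B.bb / ρ'⌋₊ := min_eq_right (le_of_lt hcase)
            have hfl : r' n * B.bb / ρ' < (⌊r' n * B.bb / ρ'⌋₊ : ℝ) + 1 :=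
              Nat.lt_floor_add_one _
            have h2 : (r' n * B.bb / ρ') * ρ2 < ((⌊r' n * B.bb / ρ'⌋₊ : ℝ) + 1) * ρ2 :=
              mul_lt_mul_of_pos_right hfl hρ2pos
            have h3 : (r' n * B.bb / ρ') * ρ2 = r' n := by
              rw [hρ2]; field_simp
            rw [hjn]
            nlinarith
        have hdecomp : (∑ n ∈ D, r' n • σ n) =
            (∑ d ∈ Finset.range m, (ρ2 • ∑ n ∈ D.filter (fun n => d + 1 ≤ j n), σ n)) +
            ∑ n ∈ D, (r' n - (j n : ℝ) * ρ2) • σ n := by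
          have h1 : ∀ d ∈ Finset.range m,
              (ρ2 • ∑ n ∈ D.filter (fun n => d + 1 ≤ j n), σ n) =
              ∑ n ∈ D, if d + 1 ≤ j n then ρ2 • σ n else 0 := by
            intro d _
            rw [Finset.smul_sum, Finset.sum_filter]
          rw [Finset.sum_congr rfl h1, Finset.sum_comm, ← Finset.sum_add_distrib]
          refine Finset.sum_congr rfl ?_
          intro n _
          have hset : (Finset.range m).filter (fun d => d + 1 ≤ j n) = Finset.range (j n) := by
            ext d
            simp only [Finset.mem_filter, Finset.mem_range]
            have := hjm n
            omega
          have h2 : (∑ d ∈ Finset.range m, if d + 1 ≤ j n then ρ2 • σ n else 0)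
              = (j n) • (ρ2 • σ n) := by
            rw [← Finset.sum_filter, hset, Finset.sum_const, Finset.card_range]
          rw [h2, ← Nat.cast_smul_eq_nsmul ℝ, smul_smul, ← add_smul]
          congr 1
          ring
        have hqT1 : B.q (∑ d ∈ Finset.range m,
            (ρ2 • ∑ n ∈ D.filter (fun n => d + 1 ≤ j n), σ n))
            ≤ B.κ ^ m * ((m : ℝ) * (ρ2 * P)) := by
          have h2 : ∀ d ∈ Finset.range m,
              B.q (ρ2 • ∑ n ∈ D.filter (fun n => d + 1 ≤ j n), σ n) ≤ ρ2 * P := by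
            intro d _
            rw [B.q_smul, abs_of_nonneg hρ20]
            exact mul_le_mul_of_nonneg_left (hK _ (Finset.filter_subset _ _)) hρ20
          calc B.q (∑ d ∈ Finset.range m, (ρ2 • ∑ n ∈ D.filter (fun n => d + 1 ≤ j n), σ n))
              ≤ B.κ ^ (Finset.range m).card *
                ∑ d ∈ Finset.range m, B.q (ρ2 • ∑ n ∈ D.filter (fun n => d + 1 ≤ j n), σ n) :=
              B.q_finset_sum _ _
          _ ≤ B.κ ^ m * ((m : ℝ) * (ρ2 * P)) := by
              rw [Finset.card_range]
              refine mul_le_mul_of_nonneg_left ?_ (pow_nonneg (le_of_lt hκ0) _)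
              calc ∑ d ∈ Finset.range m, B.q (ρ2 • ∑ n ∈ D.filter (fun n => d + 1 ≤ j n), σ n)
                  ≤ ∑ _d ∈ Finset.range m, ρ2 * P := Finset.sum_le_sum h2
              _ = (m : ℝ) * (ρ2 * P) := by rw [Finset.sum_const, Finset.card_range, nsmul_eq_mul]
        have hqT2 : B.q (∑ n ∈ D, (r' n - (j n : ℝ) * ρ2) • σ n)
            ≤ (B.KW + t ^ N * crude) * (ρ2 * P) := by
          apply ih ρ2 hρ20
          intro n hn
          exact ⟨by linarith [hjle n hn], hjup n hn⟩
        have hsum : B.q (∑ n ∈ D, r' n • σ n)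
            ≤ B.κ * (B.q (∑ d ∈ Finset.range m, (ρ2 • ∑ n ∈ D.filter (fun n => d + 1 ≤ j n), σ n))
              + B.q (∑ n ∈ D, (r' n - (j n : ℝ) * ρ2) • σ n)) := by
          rw [hdecomp]
          exact B.q_add _ _
        have hbbne : ((B.bb : ℝ)) ≠ 0 := ne_of_gt hbb0
        have hmρ2 : (m : ℝ) * ρ2 ≤ ρ' := by
          have h := mul_le_mul_of_nonneg_right hmbb hρ20
          have h2 : (B.bb : ℝ) * ρ2 = ρ' := by rw [hρ2]; field_simp
          linarith
        have e1 : B.κ * (B.κ ^ m * ((m : ℝ) * (ρ2 * P))) ≤ B.κ ^ B.bb * (ρ' * P) := by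
          have h5 : (m : ℝ) * (ρ2 * P) ≤ ρ' * P := by
            have := mul_le_mul_of_nonneg_right hmρ2 hP
            nlinarith
          calc B.κ * (B.κ ^ m * ((m : ℝ) * (ρ2 * P)))
              = B.κ ^ B.bb * ((m : ℝ) * (ρ2 * P)) := by
                rw [← hmsucc, pow_succ]; ring
          _ ≤ B.κ ^ B.bb * (ρ' * P) :=
              mul_le_mul_of_nonneg_left h5 (pow_nonneg (le_of_lt hκ0) _)
        have e2 : B.κ * ((B.KW + t ^ N * crude) * (ρ2 * P))
            = (t * B.KW + t ^ (N + 1) * crude) * (ρ' * P) := by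
          rw [hρ2, ht]
          ring
        have hKWrec := B.KW_rec
        have hρ'P : (0:ℝ) ≤ ρ' * P := mul_nonneg hρ' hP
        have e3 : (B.κ ^ B.bb + t * B.KW) * (ρ' * P) ≤ B.KW * (ρ' * P) :=
          mul_le_mul_of_nonneg_right hKWrec hρ'P
        calc B.q (∑ n ∈ D, r' n • σ n)
            ≤ B.κ * (B.κ ^ m * ((m : ℝ) * (ρ2 * P))) +
              B.κ * ((B.KW + t ^ N * crude) * (ρ2 * P)) := by
              have hc := mul_le_mul_of_nonneg_left (add_le_add hqT1 hqT2)
                (by linarith : (0:ℝ) ≤ B.κ)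
              linarith [hsum]
        _ ≤ B.κ ^ B.bb * (ρ' * P) + (t * B.KW + t ^ (N + 1) * crude) * (ρ' * P) := by
              rw [← e2]
              exact add_le_add e1 (le_refl _)
        _ ≤ (B.KW + t ^ (N + 1) * crude) * (ρ' * P) := by linarith [e3]
  have hlim : Filter.Tendsto (fun N : ℕ => (B.KW + t ^ N * crude) * (ρ * P))
      Filter.atTop (nhds (B.KW * (ρ * P))) := by
    have h1 : Filter.Tendsto (fun N : ℕ => t ^ N) Filter.atTop (nhds 0) :=
      tendsto_pow_atTop_nhds_zero_of_lt_one ht0 ht1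
    have h2 := ((h1.mul_const crude).const_add B.KW).mul_const (ρ * P)
    simpa using h2
  have hle : ∀ N, B.q (∑ n ∈ D, r n • σ n) ≤ (B.KW + t ^ N * crude) * (ρ * P) :=
    fun N => main N ρ hρ r hr
  have hfin := ge_of_tendsto' hlim hle
  linarith [hfin]

end QBasis

set_option maxHeartbeats 1600000

/-- every truncation quasi-greedy basis of a quasi-Banach space is
nearly unconditional. -/
theorem stmt4 {X : Type*} [AddCommGroup X] [Module ℝ X] (B : QBasis X)
    (htqg : B.TruncationQG) : B.NearlyUnconditional := by
  classical
  obtain ⟨C₀, hC₀⟩ := htqg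
  set C' : ℝ := max C₀ 1 with hC'
  have hC1 : (1:ℝ) ≤ C' := le_max_right _ _
  have hT : ∀ f A, B.greedySet f A → B.q (B.R A f) ≤ C' * B.q f := by
    intro f A h
    exact (hC₀ f A h).trans (mul_le_mul_of_nonneg_right (le_max_left _ _) (B.q_nonneg f))
  have hκ := B.one_le_κ
  have hKW0 := B.KW_nonneg
  intro a ha
  obtain ⟨ha0, ha1⟩ := ha
  set s : ℝ := 1 - 1 / (2 * C' * B.κ) with hs
  have hCκ2 : (2:ℝ) ≤ 2 * C' * B.κ := by nlinarith
  have hCκ0 : (0:ℝ) < 2 * C' * B.κ := by linarith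
  have hfrac : (0:ℝ) < 1 / (2 * C' * B.κ) := by positivity
  have hfrac2 : 1 / (2 * C' * B.κ) ≤ 1/2 := by
    rw [div_le_div_iff₀ hCκ0 (by norm_num)]
    linarith
  have hs0 : (0:ℝ) < s := by rw [hs]; linarith
  have hs1 : s < 1 := by rw [hs]; linarith
  have hsmalls : C' * B.κ * (1 - s) ≤ 1/2 := by
    have h1 : (1:ℝ) - s = 1 / (2 * C' * B.κ) := by rw [hs]; ring
    rw [h1]
    have h2 : C' * B.κ * (1 / (2 * C' * B.κ)) = 1/2 := by
      field_simp
    linarith [le_of_eq h2]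
  have hex : ∃ kk : ℕ, s ^ (kk + 1) ≤ a := by
    obtain ⟨n, hn⟩ := exists_pow_lt_of_lt_one ha0 hs1
    refine ⟨n, ?_⟩
    have h1 : s ^ (n + 1) ≤ s ^ n :=
      pow_le_pow_of_le_one (le_of_lt hs0) (le_of_lt hs1) (Nat.le_succ n)
    linarith
  set k := Nat.find hex with hkdef
  have hks : s ^ (k + 1) ≤ a := Nat.find_spec hex
  have hkmin : ∀ j, j ≤ k → a < s ^ j := by
    intro j hj
    cases j with
    | zero => simpa using ha1
    | succ i =>
      have hik : i < k := lt_of_lt_of_le (Nat.lt_succ_self i) hj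
      have h := Nat.find_min hex hik
      push_neg at h
      exact h
  clear_value s
  clear_value k
  set Q1 : ℝ := 2 * C' * B.κ with hQ1
  have hQ10 : (0:ℝ) ≤ Q1 := le_of_lt hCκ0
  clear_value Q1
  set Γ : ℝ := B.κ / s * (1 + B.KW * Q1) with hΓ
  have hΓ0 : (0:ℝ) ≤ Γ := by
    apply mul_nonneg (div_nonneg (by linarith) (le_of_lt hs0))
    nlinarith
  clear_value Γ
  refine ⟨B.KW * (Q1 * Γ ^ k), ?_⟩
  intro f hf Aa A hthr hAsub
  let F : ℕ → X := fun j => Nat.rec f (fun _ g =>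
    s⁻¹ • (g - ∑ n ∈ Aa.filter (fun n => s ≤ |B.c n g|),
      ((|B.c n g| - s) * Real.sign (B.c n g)) • B.e n)) j
  have hFs : ∀ j, F (j + 1) = s⁻¹ • (F j - ∑ n ∈ Aa.filter (fun n => s ≤ |B.c n (F j)|),
      ((|B.c n (F j)| - s) * Real.sign (B.c n (F j))) • B.e n) := fun j => rfl
  have habs_min : ∀ (x y : ℝ), 0 ≤ y → |Real.sign x * min 1 y| ≤ 1 := by
    intro x y hy
    rw [abs_mul]
    have h0 : (0:ℝ) ≤ min 1 y := le_min zero_le_one hy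
    have h1 : |min 1 y| ≤ 1 := by rw [abs_of_nonneg h0]; exact min_le_left _ _
    calc |Real.sign x| * |min 1 y| ≤ 1 * 1 :=
      mul_le_mul (abs_sgn_le_one x) h1 (abs_nonneg _) zero_le_one
    _ = 1 := one_mul 1
  have inv : ∀ j, j ≤ k →
      (∀ n, B.c n (F j) = Real.sign (B.c n f) * min 1 (|B.c n f| / s ^ j)) ∧
      B.q (F j) ≤ Γ ^ j * B.q f := by
    intro j
    induction j with
    | zero =>
      intro _
      constructor
      · intro n
        have h1 : |B.c n f| ≤ 1 := hf n
        show B.c n f = _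
        rw [pow_zero, div_one, min_eq_right h1, sgn_mul_abs]
      · show B.q f ≤ _
        rw [pow_zero, one_mul]
    | succ j ihj =>
      intro hjk
      have hjk' : j ≤ k := le_trans (Nat.le_succ j) hjk
      obtain ⟨hc, hq⟩ := ihj hjk'
      have hspow : (0:ℝ) < s ^ j := pow_pos hs0 j
      have hspow1 : (0:ℝ) < s ^ (j+1) := pow_pos hs0 (j+1)
      have hinQg : B.inQ (F j) := by
        intro n
        rw [hc n]
        exact habs_min _ _ (div_nonneg (abs_nonneg _) (le_of_lt hspow))
      have hKg : ∀ Bs ⊆ Aa.filter (fun n => s ≤ |B.c n (F j)|),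
          B.q (∑ n ∈ Bs, Real.sign (B.c n (F j)) • B.e n) ≤ Q1 * B.q (F j) := by
        intro Bs hBsub
        rw [hQ1, mul_assoc, ← mul_assoc]
        apply B.key_base C' hC1 hT s hs0 (le_of_lt hs1) hsmalls (F j) hinQg Bs
        intro n hn
        exact (Finset.mem_filter.mp (hBsub hn)).2
      have hcorr : B.q (∑ n ∈ Aa.filter (fun n => s ≤ |B.c n (F j)|),
          ((|B.c n (F j)| - s) * Real.sign (B.c n (F j))) • B.e n)
          ≤ B.KW * (1 - s) * (Q1 * B.q (F j)) := by
        have hrw : ∀ n, ((|B.c n (F j)| - s) * Real.sign (B.c n (F j))) • B.e n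
            = (|B.c n (F j)| - s) • (Real.sign (B.c n (F j)) • B.e n) := by
          intro n; rw [smul_smul]
        rw [Finset.sum_congr rfl (fun n _ => hrw n)]
        have hb : ∀ n ∈ Aa.filter (fun n => s ≤ |B.c n (F j)|),
            0 ≤ |B.c n (F j)| - s ∧ |B.c n (F j)| - s ≤ 1 - s := by
          intro n hn
          have h1 := (Finset.mem_filter.mp hn).2
          have h2 := hinQg n
          constructor <;> linarith
        have := B.reasm (Q1 * B.q (F j)) (1 - s) (by linarith)
          (Aa.filter (fun n => s ≤ |B.c n (F j)|))
          (fun n => Real.sign (B.c n (F j)) • B.e n) hKg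
          (fun n => |B.c n (F j)| - s) hb
        linarith [this]
      constructor
      · intro n
        have hcF : B.c n (F (j+1)) = s⁻¹ * (B.c n (F j) -
            (if n ∈ Aa.filter (fun n => s ≤ |B.c n (F j)|) then
              (|B.c n (F j)| - s) * Real.sign (B.c n (F j)) else 0)) := by
          rw [hFs j, map_smul, map_sub, B.c_sum]
          simp [smul_eq_mul]
        by_cases hzero : B.c n f = 0
        · have hcg0 : B.c n (F j) = 0 := by rw [hc n, hzero, Real.sign_zero, zero_mul]
          have hnot : n ∉ Aa.filter (fun n => s ≤ |B.c n (F j)|) := by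
            intro hmem
            have := (Finset.mem_filter.mp hmem).2
            rw [hcg0] at this
            simp at this
            linarith
          rw [hcF, if_neg hnot, hcg0, hzero, Real.sign_zero]
          simp
        · have hsgn_ne : Real.sign (B.c n f) = 1 ∨ Real.sign (B.c n f) = -1 :=
            (Real.sign_apply_eq_of_ne_zero _ hzero).symm
          set μ : ℝ := min 1 (|B.c n f| / s ^ j) with hμ
          have hμ0 : 0 ≤ μ := le_min zero_le_one (div_nonneg (abs_nonneg _) (le_of_lt hspow))
          have hcabs : |B.c n (F j)| = μ := by
            rw [hc n, abs_mul, abs_of_nonneg hμ0]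
            rcases hsgn_ne with h | h <;> rw [h] <;> norm_num
          by_cases hmem : n ∈ Aa.filter (fun n => s ≤ |B.c n (F j)|)
          · have hsμ : s ≤ μ := by
              have := (Finset.mem_filter.mp hmem).2
              rwa [hcabs] at this
            have hμpos : 0 < μ := lt_of_lt_of_le hs0 hsμ
            have hsgng : Real.sign (B.c n (F j)) = Real.sign (B.c n f) := by
              rcases hsgn_ne with h | h
              · have : B.c n (F j) = μ := by rw [hc n, h, one_mul]
                rw [this, Real.sign_of_pos hμpos, h]
              · have : B.c n (F j) = -μ := by rw [hc n, h]; ring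
                rw [this, Real.sign_of_neg (by linarith), h]
            have hcval : B.c n (F (j+1)) = Real.sign (B.c n f) := by
              rw [hcF, if_pos hmem, hsgng, hcabs, hc n]
              field_simp
              ring
            have hbig : 1 ≤ |B.c n f| / s ^ (j+1) := by
              have h1 : s ≤ |B.c n f| / s ^ j := le_trans hsμ (min_le_right _ _)
              have h2 : s * s ^ j ≤ |B.c n f| := (le_div_iff₀ hspow).mp h1
              rw [le_div_iff₀ hspow1]
              calc (1:ℝ) * s ^ (j+1) = s * s ^ j := by rw [pow_succ]; ring
              _ ≤ _ := h2
            rw [hcval, min_eq_left hbig, mul_one]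
          · have hlt : |B.c n (F j)| < s := by
              by_cases hAan : n ∈ Aa
              · have : ¬ (s ≤ |B.c n (F j)|) := by
                  intro hcon
                  exact hmem (Finset.mem_filter.mpr ⟨hAan, hcon⟩)
                linarith [not_le.mp this]
              · have h1 : |B.c n f| < a := by
                  have := hthr n
                  by_contra hcon
                  push_neg at hcon
                  exact hAan ((hthr n).mpr hcon)
                have h2 : a < s ^ (j+1) := hkmin (j+1) hjk
                have h3 : |B.c n f| / s ^ j < s := by
                  rw [div_lt_iff₀ hspow]
                  have : s * s ^ j = s ^ (j+1) := by rw [pow_succ]; ring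
                  linarith [this ▸ h2]
                rw [hcabs]
                calc μ ≤ |B.c n f| / s ^ j := min_le_right _ _
                _ < s := h3
            have hμlt : μ < s := by rwa [hcabs] at hlt
            have hμeq : μ = |B.c n f| / s ^ j := by
              rcases le_or_gt 1 (|B.c n f| / s ^ j) with hcase | hcase
              · exfalso
                have : μ = 1 := min_eq_left hcase
                rw [this] at hμlt
                linarith
              · exact min_eq_right (le_of_lt hcase)
            have hsne : s ≠ 0 := ne_of_gt hs0
            have hcval : B.c n (F (j+1)) = Real.sign (B.c n f) * (|B.c n f| / s ^ (j+1)) := by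
              rw [hcF, if_neg hmem, sub_zero, hc n, ← hμ, hμeq, pow_succ]
              ring
            have hsmall2 : |B.c n f| / s ^ (j+1) < 1 := by
              have h1 : |B.c n f| / s ^ j < s := by rw [← hμeq]; exact hμlt
              rw [div_lt_one hspow1, pow_succ]
              rw [div_lt_iff₀ hspow] at h1
              linarith
            rw [hcval, min_eq_right (le_of_lt hsmall2)]
      · have hstep : B.q (F (j+1)) ≤ Γ * B.q (F j) := by
          rw [hFs j, B.q_smul, abs_of_pos (inv_pos.mpr hs0)]
          have h1 := B.q_sub_le (F j) (∑ n ∈ Aa.filter (fun n => s ≤ |B.c n (F j)|),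
            ((|B.c n (F j)| - s) * Real.sign (B.c n (F j))) • B.e n)
          have h2 : B.q (∑ n ∈ Aa.filter (fun n => s ≤ |B.c n (F j)|),
              ((|B.c n (F j)| - s) * Real.sign (B.c n (F j))) • B.e n)
              ≤ B.KW * Q1 * B.q (F j) := by
            have h3 : B.KW * (1 - s) * (Q1 * B.q (F j)) ≤ B.KW * 1 * (Q1 * B.q (F j)) := by
              apply mul_le_mul_of_nonneg_right _ (mul_nonneg hQ10 (B.q_nonneg _))
              apply mul_le_mul_of_nonneg_left _ hKW0
              linarith
            calc _ ≤ B.KW * (1 - s) * (Q1 * B.q (F j)) := hcorr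
            _ ≤ B.KW * 1 * (Q1 * B.q (F j)) := h3
            _ = B.KW * Q1 * B.q (F j) := by ring
          have hqg0 := B.q_nonneg (F j)
          have hsinv : (0:ℝ) < s⁻¹ := inv_pos.mpr hs0
          have h4 : B.q (F j - ∑ n ∈ Aa.filter (fun n => s ≤ |B.c n (F j)|),
              ((|B.c n (F j)| - s) * Real.sign (B.c n (F j))) • B.e n)
              ≤ B.κ * ((1 + B.KW * Q1) * B.q (F j)) := by
            have := mul_le_mul_of_nonneg_left (add_le_add (le_refl (B.q (F j))) h2)
              (by linarith : (0:ℝ) ≤ B.κ)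
            calc _ ≤ B.κ * (B.q (F j) + B.q (∑ n ∈ Aa.filter (fun n => s ≤ |B.c n (F j)|),
                ((|B.c n (F j)| - s) * Real.sign (B.c n (F j))) • B.e n)) := h1
            _ ≤ B.κ * (B.q (F j) + B.KW * Q1 * B.q (F j)) := this
            _ = B.κ * ((1 + B.KW * Q1) * B.q (F j)) := by ring
          calc s⁻¹ * B.q (F j - ∑ n ∈ Aa.filter (fun n => s ≤ |B.c n (F j)|),
              ((|B.c n (F j)| - s) * Real.sign (B.c n (F j))) • B.e n)
              ≤ s⁻¹ * (B.κ * ((1 + B.KW * Q1) * B.q (F j))) :=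
              mul_le_mul_of_nonneg_left h4 (le_of_lt hsinv)
          _ = Γ * B.q (F j) := by
              rw [hΓ]
              field_simp
        calc B.q (F (j+1)) ≤ Γ * B.q (F j) := hstep
        _ ≤ Γ * (Γ ^ j * B.q f) := mul_le_mul_of_nonneg_left hq hΓ0
        _ = Γ ^ (j+1) * B.q f := by rw [pow_succ]; ring
  obtain ⟨hck, hqk⟩ := inv k (le_refl k)
  have hspowk : (0:ℝ) < s ^ k := pow_pos hs0 k
  set a' : ℝ := a / s ^ k with ha'
  have hsa' : s ≤ a' := by
    rw [ha', le_div_iff₀ hspowk]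
    calc s * s ^ k = s ^ (k+1) := by rw [pow_succ]; ring
    _ ≤ a := hks
  have ha'1 : a' < 1 := by
    rw [ha', div_lt_one hspowk]
    exact hkmin k (le_refl k)
  have ha'0 : (0:ℝ) < a' := lt_of_lt_of_le hs0 hsa'
  clear_value a'
  have hFkQ : B.inQ (F k) := by
    intro n
    rw [hck n]
    exact habs_min _ _ (div_nonneg (abs_nonneg _) (le_of_lt hspowk))
  have hsignk : ∀ n ∈ A, Real.sign (B.c n (F k)) = Real.sign (B.c n f) ∧
      a' ≤ |B.c n (F k)| := by
    intro n hn
    have hnAa : n ∈ Aa := hAsub hn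
    have hna : a ≤ |B.c n f| := (hthr n).mp hnAa
    have hne0 : B.c n f ≠ 0 := by
      intro h; rw [h] at hna; simp at hna; linarith
    have hsgn_ne : Real.sign (B.c n f) = 1 ∨ Real.sign (B.c n f) = -1 :=
      (Real.sign_apply_eq_of_ne_zero _ hne0).symm
    have hq_k : a' ≤ |B.c n f| / s ^ k := by
      rw [ha']
      exact (div_le_div_iff_of_pos_right hspowk).mpr hna
    have hμ' : a' ≤ min 1 (|B.c n f| / s ^ k) := le_min (le_of_lt ha'1) hq_k
    have hμpos : (0:ℝ) < min 1 (|B.c n f| / s ^ k) := lt_of_lt_of_le ha'0 hμ'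
    constructor
    · rcases hsgn_ne with h | h
      · have : B.c n (F k) = min 1 (|B.c n f| / s ^ k) := by rw [hck n, h, one_mul]
        rw [this, Real.sign_of_pos hμpos, h]
      · have : B.c n (F k) = -(min 1 (|B.c n f| / s ^ k)) := by rw [hck n, h]; ring
        rw [this, Real.sign_of_neg (by linarith), h]
    · rw [hck n, abs_mul]
      have h2 : |Real.sign (B.c n f)| = 1 := by
        rcases hsgn_ne with h | h <;> rw [h] <;> norm_num
      rw [h2, one_mul, abs_of_nonneg (le_of_lt hμpos)]
      exact hμ'
  have hsmalla' : C' * B.κ * (1 - a') ≤ 1/2 := by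
    have h1 : C' * B.κ * (1 - a') ≤ C' * B.κ * (1 - s) := by
      apply mul_le_mul_of_nonneg_left _ (by nlinarith : (0:ℝ) ≤ C' * B.κ)
      linarith
    linarith
  have hKfin : ∀ Bs ⊆ A, B.q (∑ n ∈ Bs, Real.sign (B.c n f) • B.e n) ≤ Q1 * B.q (F k) := by
    intro Bs hBsub
    have h1 : (∑ n ∈ Bs, Real.sign (B.c n f) • B.e n)
        = ∑ n ∈ Bs, Real.sign (B.c n (F k)) • B.e n :=
      Finset.sum_congr rfl (fun n hn => by rw [(hsignk n (hBsub hn)).1])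
    rw [h1, hQ1, mul_assoc, ← mul_assoc]
    apply B.key_base C' hC1 hT a' ha'0 (le_of_lt ha'1) hsmalla' (F k) hFkQ Bs
    intro n hn
    exact (hsignk n (hBsub hn)).2
  have hfin := B.reasm (Q1 * B.q (F k)) 1 zero_le_one A
    (fun n => Real.sign (B.c n f) • B.e n) hKfin
    (fun n => |B.c n f|) (fun n hn => ⟨abs_nonneg _, hf n⟩)
  have hSA : B.S A f = ∑ n ∈ A, |B.c n f| • (Real.sign (B.c n f) • B.e n) := by
    rw [QBasis.S]
    refine Finset.sum_congr rfl ?_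
    intro n _
    rw [smul_smul]
    congr 1
    rw [mul_comm]
    exact (sgn_mul_abs _).symm
  have hq1 : Q1 * B.q (F k) ≤ Q1 * (Γ ^ k * B.q f) := mul_le_mul_of_nonneg_left hqk hQ10
  have hlast : B.KW * 1 * (Q1 * B.q (F k)) ≤ B.KW * (Q1 * Γ ^ k) * B.q f := by
    have h2 : B.KW * (Q1 * B.q (F k)) ≤ B.KW * (Q1 * (Γ ^ k * B.q f)) :=
      mul_le_mul_of_nonneg_left hq1 hKW0
    calc B.KW * 1 * (Q1 * B.q (F k)) = B.KW * (Q1 * B.q (F k)) := by ring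
    _ ≤ B.KW * (Q1 * (Γ ^ k * B.q f)) := h2
    _ = B.KW * (Q1 * Γ ^ k) * B.q f := by ring
  calc B.q (B.S A f) = B.q (∑ n ∈ A, |B.c n f| • (Real.sign (B.c n f) • B.e n)) := by rw [hSA]
  _ ≤ B.KW * 1 * (Q1 * B.q (F k)) := hfin
  _ ≤ B.KW * (Q1 * Γ ^ k) * B.q f := hlast
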